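/- arXiv:2406.15745 — 3 statements merged into one kernel-verified Lean document; each statement's English description precedes it below -/
import Mathlib

section
/- Let R be a ring with proper involution, m a positive integer, let y be a core-EP inverse of a ∈ R, and let x ∈ R. Then x is an m-weak group inverse of a if and only if a x^2 = x and a x = y^m a^m. -/
/-- `z` is an `m`-weak group inverse of `a`. -/
def IsMWGI {R : Type*} [Ring R] [StarRing R] (m : ℕ) (a z : R) : Prop :=
  a * z ^ 2 = z ∧ ∃ k : ℕ, z * a ^ (k + 1) = a ^ k ∧
    star (a ^ k) * a ^ (m + 1) * z = star (a ^ k) * a ^ m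

/-- `w` is a weak group inverse of `b`. -/
def IsWGI {R : Type*} [Ring R] [StarRing R] (b w : R) : Prop :=
  b * w ^ 2 = w ∧ star (star b * b ^ 2 * w) = star b * b ^ 2 * w ∧
    ∃ k : ℕ, b ^ k = w * b ^ (k + 1)

/-- `x` is a group inverse of `u`. -/
def IsGroupInv {R : Type*} [Ring R] (u x : R) : Prop :=
  u * x ^ 2 = x ∧ u * x = x * u ∧ u = u ^ 2 * x

/-- `d` is a Drazin inverse of `a`. -/
def IsDrazin {R : Type*} [Ring R] (a d : R) : Prop :=
  a * d ^ 2 = d ∧ a * d = d * a ∧ ∃ k : ℕ, a ^ k = d * a ^ (k + 1)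

/-- `y` is a core-EP inverse of `a`. -/
def IsCoreEP {R : Type*} [Ring R] [StarRing R] (a y : R) : Prop :=
  a * y ^ 2 = y ∧ star (a * y) = a * y ∧ ∃ k : ℕ, a ^ k = y * a ^ (k + 1)

section Aux
variable {R : Type*} [Ring R]

private lemma pw {a : R} {i j : ℕ} (h : i = j) : a ^ i = a ^ j := by rw [h]

/-- From `a*x^2 = x`: `a^j * x^(j+1) = x`. -/
private lemma aux_outer {a x : R} (h : a * x ^ 2 = x) : ∀ j : ℕ, a ^ j * x ^ (j + 1) = x := by
  intro j
  induction j with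
  | zero => simp
  | succ n ih =>
    have e : x ^ (n + 1 + 1) = x ^ 2 * x ^ n := by rw [← pow_add]; congr 1; omega
    rw [pow_succ, e, show a ^ n * a * (x ^ 2 * x ^ n) = a ^ n * (a * x ^ 2) * x ^ n by
      simp [mul_assoc], h, mul_assoc, ← pow_succ']
    exact ih

/-- From `a*x^2 = x`: `a^(j+1) * x^(j+1) = a * x`. -/
private lemma aux_ax {a x : R} (h : a * x ^ 2 = x) (j : ℕ) :
    a ^ (j + 1) * x ^ (j + 1) = a * x := by
  have h2 := aux_outer h j
  calc a ^ (j + 1) * x ^ (j + 1) = a * (a ^ j * x ^ (j + 1)) := by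
        rw [pow_succ']; simp [mul_assoc]
    _ = a * x := by rw [h2]

/-- From `y * a^(k+1) = a^k`: shifted version. -/
private lemma aux_shift {a y : R} {k : ℕ} (h : y * a ^ (k + 1) = a ^ k) (j : ℕ) :
    y * a ^ (k + j + 1) = a ^ (k + j) := by
  have e : a ^ (k + j + 1) = a ^ (k + 1) * a ^ j := by rw [← pow_add]; congr 1; omega
  rw [e, ← mul_assoc, h, ← pow_add]

/-- Iterated: `y^i * a^(k+j+i) = a^(k+j)`. -/
private lemma aux_iter {a y : R} {k : ℕ} (h : y * a ^ (k + 1) = a ^ k) (i j : ℕ) :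
    y ^ i * a ^ (k + j + i) = a ^ (k + j) := by
  induction i with
  | zero => simp
  | succ n ih =>
    have e : a ^ (k + j + (n + 1)) = a ^ (k + n + 1) * a ^ j := by rw [← pow_add]; congr 1; omega
    have e2 : a ^ (k + n) * a ^ j = a ^ (k + j + n) := by rw [← pow_add]; congr 1; omega
    rw [pow_succ, e, mul_assoc, ← mul_assoc y, aux_shift h n, e2, ih]

/-- `y*a*y = y` for a core-EP-like inverse. -/
private lemma aux_yay {a y : R} (h1 : a * y ^ 2 = y) {k : ℕ} (h3 : y * a ^ (k + 1) = a ^ k) :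
    y * a * y = y := by
  calc y * a * y = y * a * (a ^ k * y ^ (k + 1)) := by rw [aux_outer h1 k]
    _ = y * a ^ (k + 1) * y ^ (k + 1) := by rw [pow_succ' a k]; simp [mul_assoc]
    _ = a ^ k * y ^ (k + 1) := by rw [h3]
    _ = y := aux_outer h1 k

end Aux

theorem mwgi_iff_coreEP_eq' {R : Type*} [Ring R] [StarRing R]
    (hproper : ∀ x : R, star x * x = 0 → x = 0)
    (m : ℕ) (hm : 0 < m) (a y x : R)
    (hy1 : a * y ^ 2 = y) (hy2 : star (a * y) = a * y) (k : ℕ)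
    (hy3 : y * a ^ (k + 1) = a ^ k) :
    (a * x ^ 2 = x ∧ ∃ K : ℕ, x * a ^ (K + 1) = a ^ K ∧
      star (a ^ K) * a ^ (m + 1) * x = star (a ^ K) * a ^ m)
      ↔ (a * x ^ 2 = x ∧ a * x = y ^ m * a ^ m) := by
  obtain ⟨m', rfl⟩ : ∃ m', m = m' + 1 := ⟨m - 1, by omega⟩
  set m := m' + 1 with hmdef
  constructor
  · rintro ⟨hx1, K, hK1, hK2⟩
    refine ⟨hx1, ?_⟩
    set n := max K k with hndef
    -- strengthen to common index n
    have hn1 : x * a ^ (n + 1) = a ^ n := by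
      have := aux_shift hK1 (n - K)
      rwa [show K + (n - K) = n by omega] at this
    have hn2 : y * a ^ (n + 1) = a ^ n := by
      have := aux_shift hy3 (n - k)
      rwa [show k + (n - k) = n by omega] at this
    have hn3 : star (a ^ n) * a ^ (m + 1) * x = star (a ^ n) * a ^ m := by
      have e : a ^ n = a ^ K * a ^ (n - K) := by rw [← pow_add]; congr 1; omega
      rw [e, star_mul]
      calc star (a ^ (n - K)) * star (a ^ K) * a ^ (m + 1) * x
          = star (a ^ (n - K)) * (star (a ^ K) * a ^ (m + 1) * x) := by simp [mul_assoc]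
        _ = star (a ^ (n - K)) * (star (a ^ K) * a ^ m) := by rw [hK2]
        _ = star (a ^ (n - K)) * star (a ^ K) * a ^ m := by simp [mul_assoc]
    -- a*y*a^n = a^n
    have hAYan : a * y * a ^ n = a ^ n := by
      calc a * y * a ^ n = a * y * (y * a ^ (n + 1)) := by rw [hn2]
        _ = a * y ^ 2 * a ^ (n + 1) := by rw [sq]; simp [mul_assoc]
        _ = y * a ^ (n + 1) := by rw [hy1]
        _ = a ^ n := hn2
    have hstar : star (a ^ n) * (a * y) = star (a ^ n) := by
      calc star (a ^ n) * (a * y) = star (star (a * y) * a ^ n) := by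
            rw [star_mul, star_star]
        _ = star (a * y * a ^ n) := by rw [hy2]
        _ = star (a ^ n) := by rw [hAYan]
    -- v = a^(m+1)*x - a*y*a^m
    set v : R := a ^ (m + 1) * x - a * y * a ^ m with hvdef
    have hv1 : star (a ^ n) * v = 0 := by
      rw [hvdef, mul_sub]
      have h1 : star (a ^ n) * (a ^ (m + 1) * x) = star (a ^ n) * a ^ m := by
        rw [← mul_assoc]; exact hn3
      have h2 : star (a ^ n) * (a * y * a ^ m) = star (a ^ n) * a ^ m := by
        rw [show a * y * a ^ m = (a * y) * a ^ m from rfl, ← mul_assoc, hstar]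
      rw [h1, h2, sub_self]
    have hv2 : v = a ^ n * (a ^ (m + 1) * x ^ (n + 1) - a * y ^ (n + 1) * a ^ m) := by
      rw [hvdef, mul_sub]
      congr 1
      · calc a ^ (m + 1) * x = a ^ m * (a * x) := by rw [pow_succ]; simp [mul_assoc]
          _ = a ^ m * (a ^ (n + 1) * x ^ (n + 1)) := by rw [aux_ax hx1 n]
          _ = a ^ m * a ^ (n + 1) * x ^ (n + 1) := by simp [mul_assoc]
          _ = a ^ n * a ^ (m + 1) * x ^ (n + 1) := by
              rw [← pow_add, ← pow_add, pw (show m + (n + 1) = n + (m + 1) by omega)]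
          _ = a ^ n * (a ^ (m + 1) * x ^ (n + 1)) := by simp [mul_assoc]
      · calc a * y * a ^ m = a ^ (n + 1) * y ^ (n + 1) * a ^ m := by rw [aux_ax hy1 n]
          _ = a ^ n * (a * y ^ (n + 1)) * a ^ m := by rw [pow_succ]; simp [mul_assoc]
          _ = a ^ n * (a * y ^ (n + 1) * a ^ m) := by simp [mul_assoc]
    have hv0 : v = 0 := by
      apply hproper
      rw [hv2, star_mul, mul_assoc, ← hv2, hv1, mul_zero]
    have hE : a ^ (m + 1) * x = a * y * a ^ m := by
      have := sub_eq_zero.mp (hvdef ▸ hv0)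
      exact this
    -- conclude
    have hyay : y * a * y = y := aux_yay hy1 hy3
    have hxn : a ^ n * x ^ (n + 1) = x := aux_outer hx1 n
    calc a * x = a ^ (n + 1) * x ^ (n + 1) := (aux_ax hx1 n).symm
      _ = y ^ m * a ^ (n + 1 + m) * x ^ (n + 1) := by
          rw [show n + 1 + m = n + 1 + m from rfl]
          have := aux_iter hn2 m 1
          rw [show n + 1 + m = n + 1 + m from rfl]
          have e : y ^ m * a ^ (n + 1 + m) = a ^ (n + 1) := by
            have h := aux_iter hn2 m 1
            rwa [pw (show n + 1 + m = n + 1 + m by rfl)] at h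
          rw [e]
      _ = y ^ m * (a ^ (m + 1) * (a ^ n * x ^ (n + 1))) := by
          have e : (a : R) ^ (n + 1 + m) = a ^ (m + 1) * a ^ n := by
            rw [← pow_add]; congr 1; omega
          rw [e]; simp [mul_assoc]
      _ = y ^ m * (a ^ (m + 1) * x) := by rw [hxn]
      _ = y ^ m * (a * y * a ^ m) := by rw [hE]
      _ = y ^ m' * (y * a * y) * a ^ m := by
          rw [pow_succ]; simp [mul_assoc]
      _ = y ^ m * a ^ m := by rw [hyay, ← pow_succ]
  · rintro ⟨hx1, hx2⟩
    refine ⟨hx1, k, ?_, ?_⟩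
    · -- x * a^(k+1) = a^k
      have hxx : x = y ^ m * a ^ m * x := by
        conv_lhs => rw [← hx1]
        rw [sq, ← mul_assoc, hx2]
      have ham : a ^ m * x = a ^ m' * (y ^ m * a ^ m) := by
        calc a ^ m * x = a ^ m' * (a * x) := by rw [pow_succ]; simp [mul_assoc]
          _ = a ^ m' * (y ^ m * a ^ m) := by rw [hx2]
      have key : y ^ m * a ^ (m + k + 1) = a ^ (k + 1) := by
        have h := aux_iter hy3 m 1
        rwa [pw (show k + 1 + m = m + k + 1 by omega)] at h
      have key0 : y ^ m * a ^ (k + m) = a ^ k := by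
        have h := aux_iter hy3 m 0
        rwa [pw (show k + 0 + m = k + m by omega), pw (show k + 0 = k by omega)] at h
      calc x * a ^ (k + 1) = y ^ m * (a ^ m * x) * a ^ (k + 1) := by
            rw [← mul_assoc, ← hxx]
        _ = y ^ m * (a ^ m' * (y ^ m * a ^ m)) * a ^ (k + 1) := by rw [ham]
        _ = y ^ m * a ^ m' * (y ^ m * (a ^ m * a ^ (k + 1))) := by simp [mul_assoc]
        _ = y ^ m * a ^ m' * (y ^ m * a ^ (m + k + 1)) := by
            rw [← pow_add, pw (show m + (k + 1) = m + k + 1 by omega)]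
        _ = y ^ m * a ^ m' * a ^ (k + 1) := by rw [key]
        _ = y ^ m * a ^ (k + m) := by
            rw [mul_assoc, ← pow_add, pw (show m' + (k + 1) = k + m by omega)]
        _ = a ^ k := key0
    · -- star (a^k) * a^(m+1) * x = star (a^k) * a^m
      have hAYak : a * y * a ^ k = a ^ k := by
        calc a * y * a ^ k = a * y * (y * a ^ (k + 1)) := by rw [hy3]
          _ = a * y ^ 2 * a ^ (k + 1) := by rw [sq]; simp [mul_assoc]
          _ = y * a ^ (k + 1) := by rw [hy1]
          _ = a ^ k := hy3
      have hstar : star (a ^ k) * (a * y) = star (a ^ k) := by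
        calc star (a ^ k) * (a * y) = star (star (a * y) * a ^ k) := by
              rw [star_mul, star_star]
          _ = star (a * y * a ^ k) := by rw [hy2]
          _ = star (a ^ k) := by rw [hAYak]
      have hE : a ^ (m + 1) * x = a * y * a ^ m := by
        calc a ^ (m + 1) * x = a ^ m * (a * x) := by rw [pow_succ]; simp [mul_assoc]
          _ = a ^ m * (y ^ m * a ^ m) := by rw [hx2]
          _ = a ^ m * y ^ m * a ^ m := by simp [mul_assoc]
          _ = a * y * a ^ m := by rw [aux_ax hy1 m']
      rw [mul_assoc, hE, show a * y * a ^ m = (a * y) * a ^ m from rfl, ← mul_assoc, hstar]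

theorem mwgi_iff_coreEP_eq {R : Type*} [Ring R] [StarRing R]
    (hproper : ∀ x : R, star x * x = 0 → x = 0)
    (m : ℕ) (hm : 0 < m) (a y x : R) (hy : IsCoreEP a y) :
    IsMWGI m a x ↔ (a * x ^ 2 = x ∧ a * x = y ^ m * a ^ m) := by
  obtain ⟨hy1, hy2, k, hy3⟩ := hy
  exact mwgi_iff_coreEP_eq' hproper m hm a y x hy1 hy2 k hy3.symm
end

section
/- Let R be a ring with proper involution, m a positive integer, let y be a core-EP inverse of a ∈ R, and let x = y^(m+1) a^m (which is an m-weak group inverse of a). Then the following are equivalent: (1) x = y; (2) a y = y^m a^m; (3) a x = a y. -/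
theorem mwgi_eq_coreEP_tfae {R : Type*} [Ring R] [StarRing R]
    (hproper : ∀ x : R, star x * x = 0 → x = 0)
    (m : ℕ) (hm : 0 < m) (a y x : R) (hy : IsCoreEP a y)
    (hx : x = y ^ (m + 1) * a ^ m) :
    (x = y ↔ a * y = y ^ m * a ^ m) ∧ (x = y ↔ a * x = a * y) := by
  obtain ⟨h1, h2, k, h3⟩ := hy
  have hpow : ∀ n : ℕ, a ^ n * y ^ (n + 1) = y := by
    intro n
    induction n with
    | zero => simp
    | succ n ih =>
      calc a ^ (n + 1) * y ^ (n + 1 + 1)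
          = a ^ n * a * (y ^ 2 * y ^ n) := by
            rw [pow_succ, show n + 1 + 1 = 2 + n from by omega, pow_add]
        _ = a ^ n * (a * y ^ 2 * y ^ n) := by simp [mul_assoc]
        _ = a ^ n * y ^ (n + 1) := by rw [h1, ← pow_succ']
        _ = y := ih
  have hyay : y * a * y = y := by
    calc y * a * y = y * a * (a ^ k * y ^ (k + 1)) := by rw [hpow k]
      _ = y * a ^ (k + 1) * y ^ (k + 1) := by rw [pow_succ' a k]; simp [mul_assoc]
      _ = a ^ k * y ^ (k + 1) := by rw [← h3]
      _ = y := hpow k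
  have hay : ∀ n : ℕ, a * y ^ (n + 2) = y ^ (n + 1) := by
    intro n
    calc a * y ^ (n + 2)
        = a * y ^ 2 * y ^ n := by
          rw [show n + 2 = 2 + n from by omega, pow_add, mul_assoc]
      _ = y ^ (n + 1) := by rw [h1, ← pow_succ']
  obtain ⟨p, rfl⟩ : ∃ p, m = p + 1 := ⟨m - 1, (Nat.succ_pred_eq_of_pos hm).symm⟩
  have hax : a * x = y ^ (p + 1) * a ^ (p + 1) := by
    rw [hx, ← mul_assoc, hay p]
  have key : x = y ↔ a * y = y ^ (p + 1) * a ^ (p + 1) := by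
    constructor
    · intro h
      rw [← hax, h]
    · intro h
      calc x = y ^ (p + 1 + 1) * a ^ (p + 1) := hx
        _ = y * (y ^ (p + 1) * a ^ (p + 1)) := by rw [pow_succ' y (p + 1), mul_assoc]
        _ = y * (a * y) := by rw [← h]
        _ = y := by rw [← mul_assoc, hyay]
  refine ⟨key, ?_⟩
  constructor
  · intro h; rw [h]
  · intro h
    rw [key, ← hax, h]
end

section
/- Let R be a ring with proper involution and let y be a core-EP inverse of a ∈ R. Set p = a y, which is a self-adjoint idempotent. Then (1 − p) a p = 0; that is, relative to the Pierce decomposition determined by p, the element a is upper triangular. -/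
theorem coreEP_upper_triangular {R : Type*} [Ring R] [StarRing R]
    (hproper : ∀ x : R, star x * x = 0 → x = 0)
    (a y : R) (hy : IsCoreEP a y) (p : R) (hp : p = a * y) :
    star p = p ∧ p ^ 2 = p ∧ (1 - p) * a * p = 0 := by
  obtain ⟨h1, h2, k, h3⟩ := hy
  subst hp
  have hca : ∀ n : ℕ, a * a ^ n = a ^ n * a := fun n => (pow_succ' a n).symm.trans (pow_succ a n)
  have hcy : ∀ n : ℕ, y * y ^ n = y ^ n * y := fun n => (pow_succ' y n).symm.trans (pow_succ y n)
  have hca' : ∀ (n : ℕ) (x : R), a * (a ^ n * x) = a ^ n * (a * x) := fun n x => by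
    rw [← mul_assoc, hca, mul_assoc]
  have hcy' : ∀ (n : ℕ) (x : R), y * (y ^ n * x) = y ^ n * (y * x) := fun n x => by
    rw [← mul_assoc, hcy, mul_assoc]
  have hyn : ∀ n : ℕ, y = a ^ n * y ^ (n + 1) := by
    intro n
    induction n with
    | zero => simp
    | succ n ih =>
      calc y = a ^ n * y ^ (n + 1) := ih
        _ = a ^ n * (y * y ^ n) := by rw [pow_succ']
        _ = a ^ n * ((a * y ^ 2) * y ^ n) := by rw [h1]
        _ = a ^ (n + 1) * y ^ (n + 2) := by
            simp only [pow_succ, pow_succ', pow_zero, one_mul, mul_assoc, hca, hcy, hca', hcy']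
  have hya : y * a ^ (k + 1) = a ^ k := h3.symm
  have hyay : y * a * y = y := by
    calc y * a * y = y * a * (a ^ k * y ^ (k + 1)) := by rw [← hyn]
      _ = (y * a ^ (k + 1)) * y ^ (k + 1) := by
          simp only [pow_succ, pow_succ', pow_zero, one_mul, mul_assoc, hca, hcy, hca', hcy']
      _ = a ^ k * y ^ (k + 1) := by rw [hya]
      _ = y := (hyn k).symm
  refine ⟨h2, ?_, ?_⟩
  · calc (a * y) ^ 2 = a * (y * a * y) := by noncomm_ring
      _ = a * y := by rw [hyay]
  · have hya2 : y * a ^ (k + 2) = a ^ (k + 1) := by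
      calc y * a ^ (k + 2) = (y * a ^ (k + 1)) * a := by
            rw [pow_succ a (k+1)]; noncomm_ring
        _ = a ^ k * a := by rw [hya]
        _ = a ^ (k + 1) := (pow_succ a k).symm
    have key : a * y * (a * (a * y)) = a * (a * y) := by
      calc a * y * (a * (a * y)) = a * y * (a ^ 2 * y) := by noncomm_ring
        _ = a * y * (a ^ 2 * (a ^ k * y ^ (k + 1))) := by rw [← hyn]
        _ = a * (y * a ^ (k + 2)) * y ^ (k + 1) := by
            simp only [pow_succ, pow_succ', pow_zero, one_mul, mul_assoc, hca, hcy, hca', hcy']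
        _ = a * a ^ (k + 1) * y ^ (k + 1) := by rw [hya2]
        _ = a ^ 2 * (a ^ k * y ^ (k + 1)) := by
            simp only [pow_succ, pow_succ', pow_zero, one_mul, mul_assoc, hca, hcy, hca', hcy']
        _ = a ^ 2 * y := by rw [← hyn]
        _ = a * (a * y) := by noncomm_ring
    calc (1 - (a * y)) * a * (a * y)
        = a * (a * y) - a * y * (a * (a * y)) := by noncomm_ring
      _ = 0 := by rw [key, sub_self]
end
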